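/- In the setting of Theorem 1, the squared H₂ norm (1/M̂²)·Tr(P⁻¹(M̂ J L⁻¹ + K)) is a nondecreasing function of σ̂² on the interval where P remains positive definite, and tends to +∞ as σ̂² approaches the critical value 2β/(M̂(β² + λ_max(L)M̂)), provided M̂ J L⁻¹ + K is positive definite. -/

import Mathlib

open Matrix

section aux
variable {n : Type*} [Fintype n] [DecidableEq n]

lemma myConjPosDef {V B : Matrix n n ℝ} (hV : V * Vᴴ = 1) (hB : B.PosDef) :
    (V * B * Vᴴ).PosDef := by
  rw [posDef_iff_dotProduct_mulVec]
  constructor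
  · have h := hB.1
    unfold Matrix.IsHermitian at h ⊢
    simp only [conjTranspose_mul, conjTranspose_conjTranspose, h, Matrix.mul_assoc]
  · intro x hx
    have hx' : Vᴴ *ᵥ x ≠ 0 := by
      intro h0
      apply hx
      have : V *ᵥ (Vᴴ *ᵥ x) = V *ᵥ 0 := by rw [h0]
      rwa [mulVec_mulVec, hV, one_mulVec, mulVec_zero] at this
    have key : star x ⬝ᵥ (V * B * Vᴴ) *ᵥ x = star (Vᴴ *ᵥ x) ⬝ᵥ B *ᵥ (Vᴴ *ᵥ x) := by
      rw [star_mulVec, conjTranspose_conjTranspose, mulVec_mulVec, dotProduct_mulVec,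
        dotProduct_mulVec, vecMul_vecMul, Matrix.mul_assoc]
    rw [key]
    exact hB.dotProduct_mulVec_pos hx'

lemma myConjPosDefIff {V B : Matrix n n ℝ} (h1 : V * Vᴴ = 1) (h2 : Vᴴ * V = 1) :
    (V * B * Vᴴ).PosDef ↔ B.PosDef := by
  constructor
  · intro h
    have := myConjPosDef (V := Vᴴ) (B := V * B * Vᴴ)
      (by rw [conjTranspose_conjTranspose]; exact h2) h
    have e : Vᴴ * (V * B * Vᴴ) * Vᴴᴴ = B := by
      rw [conjTranspose_conjTranspose, ← Matrix.mul_assoc, ← Matrix.mul_assoc, h2, one_mul,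
        Matrix.mul_assoc, h2, mul_one]
    rwa [e] at this
  · exact myConjPosDef h1

lemma myTraceMulDiag (B : Matrix n n ℝ) (v : n → ℝ) :
    (B * diagonal v).trace = ∑ i, B i i * v i := by
  simp [Matrix.trace, Matrix.diag, Matrix.mul_apply, Matrix.diagonal_apply, mul_ite, mul_zero]

lemma myDiagPos {A : Matrix n n ℝ} (hA : A.PosDef) (i : n) : 0 < A i i := by
  have := hA.dotProduct_mulVec_pos (x := Pi.single i 1) (by simp [Function.ne_iff])
  simpa [mulVec_single, dotProduct, Pi.single_apply] using this

end aux

/-- The squared `H₂` norm `(1/M̂²)·Tr(P(σ̂²)⁻¹(M̂ J L⁻¹ + K))` is nondecreasing in `σ̂²`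
on the region where `P(σ̂²)` is positive definite, and blows up to `+∞` as `σ̂²`
approaches the critical value `2β/(M̂(β² + λ_max(L)M̂))`. -/
theorem stmt9 {N : ℕ} (hN : 0 < N) (L J K : Matrix (Fin N) (Fin N) ℝ)
    (hL : L.PosDef) (hJ : J.PosSemidef) (hK : K.PosSemidef)
    (M β : ℝ) (hM : 0 < M) (hβ : 0 < β)
    (hX : (M • (J * L⁻¹) + K).PosDef)
    (P : ℝ → Matrix (Fin N) (Fin N) ℝ)
    (hP : ∀ s, P s = (2 * β / M - s * β ^ 2) • (1 : Matrix (Fin N) (Fin N) ℝ) - (s * M) • L)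
    (f : ℝ → ℝ)
    (hf : ∀ s, f s = (1 / M ^ 2) * ((P s)⁻¹ * (M • (J * L⁻¹) + K)).trace)
    (sc : ℝ) (hsc : sc = 2 * β / (M * (β ^ 2 + (⨆ j, hL.1.eigenvalues j) * M))) :
    MonotoneOn f {s : ℝ | 0 ≤ s ∧ (P s).PosDef} ∧
      Filter.Tendsto f (nhdsWithin sc (Set.Iio sc)) Filter.atTop := by
  classical
  haveI : Nonempty (Fin N) := ⟨⟨0, hN⟩⟩
  set X : Matrix (Fin N) (Fin N) ℝ := M • (J * L⁻¹) + K with hXdef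
  set U : Matrix (Fin N) (Fin N) ℝ :=
    (IsHermitian.eigenvectorUnitary hL.1 : Matrix (Fin N) (Fin N) ℝ) with hUdef
  have hU1 : U * Uᴴ = 1 := by
    rw [← star_eq_conjTranspose]
    exact Matrix.mem_unitaryGroup_iff.mp (IsHermitian.eigenvectorUnitary hL.1).2
  have hU2 : Uᴴ * U = 1 := by
    rw [← star_eq_conjTranspose]
    exact Matrix.mem_unitaryGroup_iff'.mp (IsHermitian.eigenvectorUnitary hL.1).2
  set μ : Fin N → ℝ := hL.1.eigenvalues with hμdef
  have hμpos : ∀ i, 0 < μ i := fun i => hL.eigenvalues_pos i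
  have hspec : L = U * diagonal μ * Uᴴ := by
    have h := hL.1.spectral_theorem
    have h2 : (RCLike.ofReal ∘ hL.1.eigenvalues : Fin N → ℝ) = μ := by
      funext i; simp [hμdef]
    rw [h2] at h
    rw [← star_eq_conjTranspose]
    exact h
  set g : Fin N → ℝ → ℝ := fun i s => 2 * β / M - s * (β ^ 2 + M * μ i) with hgdef
  have hkey : ∀ s, P s = U * diagonal (fun i => g i s) * Uᴴ := by
    intro s
    have hinner : (2 * β / M - s * β ^ 2) • (1 : Matrix (Fin N) (Fin N) ℝ) -
        (s * M) • diagonal μ = diagonal (fun i => g i s) := by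
      ext i j
      rcases eq_or_ne i j with rfl | hij
      · simp [hgdef, Matrix.one_apply_eq]
        ring
      · simp [Matrix.one_apply_ne hij, Matrix.diagonal_apply_ne _ hij]
    rw [hP, hspec, ← hinner]
    simp only [Matrix.sub_mul, Matrix.mul_sub, Matrix.mul_smul, Matrix.smul_mul,
      Matrix.mul_one, hU1, Matrix.mul_assoc]
  have hPosIff : ∀ s, ((P s).PosDef ↔ ∀ i, 0 < g i s) := by
    intro s
    rw [hkey s, myConjPosDefIff hU1 hU2, posDef_diagonal_iff]
  have hInv : ∀ s, (∀ i, 0 < g i s) → (P s)⁻¹ = U * diagonal (fun i => (g i s)⁻¹) * Uᴴ := by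
    intro s hg
    apply inv_eq_right_inv
    rw [hkey s]
    calc (U * diagonal (fun i => g i s) * Uᴴ) * (U * diagonal (fun i => (g i s)⁻¹) * Uᴴ)
        = U * (diagonal (fun i => g i s) * ((Uᴴ * U) * (diagonal (fun i => (g i s)⁻¹) * Uᴴ))) := by
          simp only [Matrix.mul_assoc]
      _ = U * ((diagonal (fun i => g i s) * diagonal (fun i => (g i s)⁻¹)) * Uᴴ) := by
          rw [hU2, one_mul, Matrix.mul_assoc]
      _ = 1 := by
          rw [diagonal_mul_diagonal]
          have : (fun i => g i s * (g i s)⁻¹) = fun _ => (1 : ℝ) := by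
            funext i; exact mul_inv_cancel₀ (hg i).ne'
          rw [this, diagonal_one, one_mul, hU1]
  set c : Fin N → ℝ := fun i => (Uᴴ * X * U) i i with hcdef
  have hXU : (Uᴴ * X * U).PosDef := by
    have := myConjPosDef (V := Uᴴ) (B := X)
      (by rw [conjTranspose_conjTranspose]; exact hU2) hX
    rwa [conjTranspose_conjTranspose] at this
  have hc : ∀ i, 0 < c i := fun i => myDiagPos hXU i
  have htr : ∀ s, (∀ i, 0 < g i s) → f s = (1 / M ^ 2) * ∑ i, (g i s)⁻¹ * c i := by
    intro s hg
    rw [hf, hInv s hg]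
    congr 1
    rw [show (U * diagonal (fun i => (g i s)⁻¹) * Uᴴ) * X
          = (U * diagonal (fun i => (g i s)⁻¹)) * (Uᴴ * X) from by rw [Matrix.mul_assoc],
      trace_mul_comm,
      show (Uᴴ * X) * (U * diagonal (fun i => (g i s)⁻¹))
          = (Uᴴ * X * U) * diagonal (fun i => (g i s)⁻¹) from by
            simp only [Matrix.mul_assoc],
      myTraceMulDiag]
    exact Finset.sum_congr rfl fun i _ => mul_comm _ _
  constructor
  · intro s₁ hs₁ s₂ hs₂ h12
    have hg1 := (hPosIff s₁).mp hs₁.2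
    have hg2 := (hPosIff s₂).mp hs₂.2
    rw [htr s₁ hg1, htr s₂ hg2]
    apply mul_le_mul_of_nonneg_left _ (by positivity)
    apply Finset.sum_le_sum
    intro i _
    have hA : (0:ℝ) ≤ β ^ 2 + M * μ i :=
      add_nonneg (sq_nonneg β) (mul_pos hM (hμpos i)).le
    have hge : g i s₂ ≤ g i s₁ := by
      simp only [hgdef]
      exact sub_le_sub_left (mul_le_mul_of_nonneg_right h12 hA) _
    exact mul_le_mul_of_nonneg_right (inv_anti₀ (hg2 i) hge) (hc i).le
  · obtain ⟨i₀, hi₀⟩ := Finite.exists_max μ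
    have hsup : (⨆ j, μ j) = μ i₀ :=
      le_antisymm (ciSup_le hi₀) (le_ciSup (Set.Finite.bddAbove (Set.finite_range μ)) i₀)
    set A : ℝ := β ^ 2 + M * μ i₀ with hAdef
    have hA : 0 < A := add_pos_of_nonneg_of_pos (sq_nonneg β) (mul_pos hM (hμpos i₀))
    have hsc' : sc = 2 * β / (M * A) := by
      rw [hsc, hsup]
      congr 2
      rw [hAdef]; ring
    have hscpos : 0 < sc := by rw [hsc']; positivity
    have hgi₀ : ∀ s, g i₀ s = A * (sc - s) := by
      intro s
      rw [hsc', hgdef]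
      have hMA : M * A ≠ 0 := by positivity
      field_simp
      ring
    have hb : ∀ s ∈ Set.Ioo 0 sc, (1 / M ^ 2) * ((g i₀ s)⁻¹ * c i₀) ≤ f s := by
      intro s hs
      have hgpos : ∀ i, 0 < g i s := by
        intro i
        have h1 : g i₀ s ≤ g i s := by
          simp only [hgdef]
          have : β ^ 2 + M * μ i ≤ β ^ 2 + M * μ i₀ := by
            have := hi₀ i
            nlinarith
          exact sub_le_sub_left (mul_le_mul_of_nonneg_left this hs.1.le) _
        have h2 : 0 < g i₀ s := by
          rw [hgi₀]
          exact mul_pos hA (by linarith [hs.2])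
        linarith
      rw [htr s hgpos]
      apply mul_le_mul_of_nonneg_left _ (by positivity)
      exact Finset.single_le_sum
        (f := fun i => (g i s)⁻¹ * c i)
        (fun i _ => (mul_pos (inv_pos.mpr (hgpos i)) (hc i)).le)
        (Finset.mem_univ i₀)
    have h1 : Filter.Tendsto (fun s => sc - s) (nhdsWithin sc (Set.Iio sc))
        (nhdsWithin 0 (Set.Ioi 0)) := by
      apply tendsto_nhdsWithin_of_tendsto_nhds_of_eventually_within
      · have h0 : Filter.Tendsto (fun s : ℝ => sc - s) (nhds sc) (nhds (sc - sc)) :=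
          tendsto_const_nhds.sub Filter.tendsto_id
        rw [sub_self] at h0
        exact h0.mono_left nhdsWithin_le_nhds
      · filter_upwards [self_mem_nhdsWithin] with s hs
        exact sub_pos.mpr (Set.mem_Iio.mp hs)
    have h2 : Filter.Tendsto (fun s => (sc - s)⁻¹) (nhdsWithin sc (Set.Iio sc))
        Filter.atTop := tendsto_inv_nhdsGT_zero.comp h1
    have h3 : Filter.Tendsto (fun s => (1 / M ^ 2) * ((g i₀ s)⁻¹ * c i₀))
        (nhdsWithin sc (Set.Iio sc)) Filter.atTop := by
      have heq : (fun s => (1 / M ^ 2) * ((g i₀ s)⁻¹ * c i₀))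
          = fun s => (c i₀ / (M ^ 2 * A)) * (sc - s)⁻¹ := by
        funext s
        rw [hgi₀ s, mul_inv]
        field_simp
      rw [heq]
      exact Filter.Tendsto.const_mul_atTop (div_pos (hc i₀) (by positivity)) h2
    refine Filter.tendsto_atTop_mono' _ ?_ h3
    filter_upwards [Ioo_mem_nhdsLT_of_mem ⟨hscpos, le_refl sc⟩] with s hs
    exact hb s hs
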